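/- Let λ < −1 and δ > 0. There is no function u : ℝ → ℝ that is twice continuously differentiable on [0, δ) with u(0) = 0, u'(0) = 0 and satisfying, for every r ∈ (0, δ): u'(r)·u''(r) = r·(1 + u'(r)²)²·(1/√(1 + u'(r)²) + λ). -/

import Mathlib

/-- For `λ < −1` there is no `C²` function `u` on `[0, δ)` with
`u(0) = u'(0) = 0` satisfying `u' u'' = r (1 + u'²)² (1/√(1 + u'²) + λ)` on `(0, δ)`. -/
theorem no_rotational_translator_orthogonal_to_axis_of_lt_neg_one
    (lam δ : ℝ) (hlam : lam < -1) (hδ : 0 < δ) :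
    ¬ ∃ u u' u'' : ℝ → ℝ,
      (∀ r ∈ Set.Ico (0 : ℝ) δ, HasDerivWithinAt u (u' r) (Set.Ico (0 : ℝ) δ) r) ∧
      (∀ r ∈ Set.Ico (0 : ℝ) δ, HasDerivWithinAt u' (u'' r) (Set.Ico (0 : ℝ) δ) r) ∧
      ContinuousOn u'' (Set.Ico (0 : ℝ) δ) ∧
      u 0 = 0 ∧ u' 0 = 0 ∧
      (∀ r ∈ Set.Ioo (0 : ℝ) δ,
        u' r * u'' r =
          r * (1 + u' r ^ 2) ^ 2 * (1 / Real.sqrt (1 + u' r ^ 2) + lam)) := by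
  rintro ⟨u, u', u'', hu, hu', hu''c, hu0, hu'0, heq⟩
  set f : ℝ → ℝ := fun r => (u' r) ^ 2 with hf
  -- u' u'' < 0 on (0, δ)
  have hneg : ∀ x ∈ Set.Ioo (0 : ℝ) δ, u' x * u'' x < 0 := by
    intro x hx
    rw [heq x hx]
    have h1 : (0 : ℝ) < 1 + u' x ^ 2 := by positivity
    have hs : (1 : ℝ) ≤ Real.sqrt (1 + u' x ^ 2) := by
      nlinarith [Real.sq_sqrt h1.le, Real.sqrt_nonneg (1 + u' x ^ 2), sq_nonneg (u' x)]
    have h2 : 1 / Real.sqrt (1 + u' x ^ 2) + lam < 0 := by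
      have : 1 / Real.sqrt (1 + u' x ^ 2) ≤ 1 := by
        rw [div_le_one (by linarith)]; exact hs
      linarith
    have hx0 : 0 < x := hx.1
    have h3 : 0 < x * (1 + u' x ^ 2) ^ 2 := by positivity
    exact mul_neg_of_pos_of_neg h3 h2
  -- f has derivative 2 u' u'' < 0 at each point of (0, δ)
  have hfd : ∀ x ∈ Set.Ioo (0 : ℝ) δ, HasDerivAt f (2 * u' x * u'' x) x := by
    intro x hx
    have hmem : Set.Ico (0 : ℝ) δ ∈ nhds x :=
      Filter.mem_of_superset (isOpen_Ioo.mem_nhds hx) Set.Ioo_subset_Ico_self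
    have h1 : HasDerivAt u' (u'' x) x :=
      (hu' x (Set.Ioo_subset_Ico_self hx)).hasDerivAt hmem
    have := (hasDerivAt_pow 2 (u' x)).comp x h1
    refine this.congr_deriv ?_
    norm_num
  -- f is continuous on [0, δ/2]
  have hsub : Set.Icc (0 : ℝ) (δ / 2) ⊆ Set.Ico (0 : ℝ) δ := by
    intro x hx; exact ⟨hx.1, by linarith [hx.2]⟩
  have hfc : ContinuousOn f (Set.Icc (0 : ℝ) (δ / 2)) := by
    have : ContinuousOn u' (Set.Ico (0 : ℝ) δ) :=
      fun x hx => (hu' x hx).continuousWithinAt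
    exact (this.mono hsub).pow 2
  have hanti : StrictAntiOn f (Set.Icc (0 : ℝ) (δ / 2)) := by
    apply StrictAntiOn.mono _ (Set.Subset.refl _)
    apply strictAntiOn_of_deriv_neg (convex_Icc _ _) hfc
    intro x hx
    rw [interior_Icc] at hx
    have hx' : x ∈ Set.Ioo (0 : ℝ) δ := ⟨hx.1, by linarith [hx.2]⟩
    rw [(hfd x hx').deriv]
    have := hneg x hx'
    linarith
  have h0 : (0 : ℝ) ∈ Set.Icc (0 : ℝ) (δ / 2) := by constructor <;> linarith
  have h1 : δ / 2 ∈ Set.Icc (0 : ℝ) (δ / 2) := by constructor <;> linarith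
  have := hanti h0 h1 (by linarith)
  have hf0 : f 0 = 0 := by simp [hf, hu'0]
  have : f (δ / 2) < 0 := by linarith
  have : (0 : ℝ) ≤ f (δ / 2) := sq_nonneg _
  linarith
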